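/- (Combinatorial solution formula) Let V ∈ ℝ^{n×r} be a Chebyshev system and a ∈ ℝ^n, n > r. Then inf_{u ∈ ℝ^r} ‖a − Vu‖_∞ equals the maximum, over all index sets i_1 < … < i_{r+1} from {1,…,n}, of |det[V(i_1,…,i_{r+1}) | a(i_1,…,i_{r+1})]| divided by Σ_{k=1}^{r+1} |det( V(i_1,…,i_{r+1}) with row k deleted )|. -/

import Mathlib

open Matrix

namespace Stmt14

variable {n r : ℕ}

/-- matrix with last column `b`, first `r` columns from `V` on rows `f`. -/
def bmat (V : Matrix (Fin n) (Fin r) ℝ) (f : Fin (r+1) → Fin n) (b : Fin (r+1) → ℝ) :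
    Matrix (Fin (r+1)) (Fin (r+1)) ℝ :=
  Matrix.of fun p q => Fin.lastCases (b p) (fun i => V (f p) i) q

/-- signed cofactor of last column -/
noncomputable def cof (V : Matrix (Fin n) (Fin r) ℝ) (f : Fin (r+1) → Fin n) (k : Fin (r+1)) : ℝ :=
  (-1 : ℝ)^(k + r : ℕ) * (Matrix.of fun (p : Fin r) (i : Fin r) => V (f (Fin.succAbove k p)) i).det

lemma det_bmat (V : Matrix (Fin n) (Fin r) ℝ) (f : Fin (r+1) → Fin n) (b : Fin (r+1) → ℝ) :
    (bmat V f b).det = ∑ k, cof V f k * b k := by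
  rw [Matrix.det_succ_column (bmat V f b) (Fin.last r)]
  refine Finset.sum_congr rfl fun k _ => ?_
  have h1 : bmat V f b k (Fin.last r) = b k := by
    simp [bmat, Fin.lastCases_last]
  have h2 : (bmat V f b).submatrix k.succAbove (Fin.last r).succAbove =
      Matrix.of fun (p : Fin r) (i : Fin r) => V (f (Fin.succAbove k p)) i := by
    ext p i
    simp [bmat, Fin.succAbove_last, Fin.lastCases_castSucc]
  rw [h1, h2, cof]
  have : ((Fin.last r : Fin (r+1)) : ℕ) = r := rfl
  rw [this]
  ring

end Stmt14

namespace Stmt14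

variable {n r : ℕ} (V : Matrix (Fin n) (Fin r) ℝ) (a : Fin n → ℝ)

lemma cof_dot_col (f : Fin (r+1) → Fin n) (j : Fin r) :
    ∑ k, cof V f k * V (f k) j = 0 := by
  have h0 : (bmat V f (fun p => V (f p) j)).det = 0 := by
    refine Matrix.det_zero_of_column_eq (M := bmat V f (fun p => V (f p) j))
      (i := Fin.castSucc j) (j := Fin.last r) (Fin.castSucc_lt_last j).ne fun p => ?_
    simp [bmat, Fin.lastCases_castSucc, Fin.lastCases_last]
  rw [det_bmat] at h0
  exact h0

lemma cof_dot_mulVec (f : Fin (r+1) → Fin n) (u : Fin r → ℝ) :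
    ∑ k, cof V f k * V.mulVec u (f k) = 0 := by
  have : ∀ k, cof V f k * V.mulVec u (f k) = ∑ j, (cof V f k * V (f k) j) * u j := by
    intro k
    simp only [Matrix.mulVec, dotProduct, Finset.mul_sum]
    exact Finset.sum_congr rfl fun j _ => by ring
  rw [Finset.sum_congr rfl fun k _ => this k, Finset.sum_comm]
  refine Finset.sum_eq_zero fun j _ => ?_
  rw [← Finset.sum_mul, cof_dot_col, zero_mul]

lemma abs_cof (f : Fin (r+1) → Fin n) (k : Fin (r+1)) :
    |cof V f k| = |(Matrix.of fun (p : Fin r) (i : Fin r) => V (f (Fin.succAbove k p)) i).det| := by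
  rw [cof, abs_mul, abs_pow, abs_neg, abs_one, one_pow, one_mul]

lemma sumabs_pos (hcheb : ∀ f : Fin r → Fin n, Function.Injective f →
      (Matrix.of fun k i => V (f k) i).det ≠ 0)
    (f : Fin (r+1) → Fin n) (hf : Function.Injective f) :
    0 < ∑ k, |cof V f k| := by
  refine Finset.sum_pos' (fun k _ => abs_nonneg _) ⟨0, Finset.mem_univ _, ?_⟩
  rw [abs_cof]
  exact abs_pos.mpr (hcheb _ (hf.comp (Fin.succAbove_right_injective)))

lemma cof_ne_zero (hcheb : ∀ f : Fin r → Fin n, Function.Injective f →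
      (Matrix.of fun k i => V (f k) i).det ≠ 0)
    (f : Fin (r+1) → Fin n) (hf : Function.Injective f) (k : Fin (r+1)) :
    cof V f k ≠ 0 := by
  have : |cof V f k| ≠ 0 := by
    rw [abs_cof]
    exact abs_ne_zero.mpr (hcheb _ (hf.comp (Fin.succAbove_right_injective)))
  exact fun h => this (by rw [h, abs_zero])

lemma lower_bound (hcheb : ∀ f : Fin r → Fin n, Function.Injective f →
      (Matrix.of fun k i => V (f k) i).det ≠ 0)
    (f : Fin (r+1) → Fin n) (hf : Function.Injective f) (u : Fin r → ℝ) :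
    |(bmat V f (fun p => a (f p))).det| / ∑ k, |cof V f k| ≤ ‖a - V.mulVec u‖ := by
  rw [div_le_iff₀ (sumabs_pos V hcheb f hf)]
  have key : (bmat V f (fun p => a (f p))).det
      = ∑ k, cof V f k * (a (f k) - V.mulVec u (f k)) := by
    rw [det_bmat]
    have := cof_dot_mulVec V f u
    rw [Finset.sum_congr rfl (fun k _ => mul_sub (cof V f k) (a (f k)) (V.mulVec u (f k))),
      Finset.sum_sub_distrib, this, sub_zero]
  rw [key]
  calc |∑ k, cof V f k * (a (f k) - V.mulVec u (f k))|
      ≤ ∑ k, |cof V f k * (a (f k) - V.mulVec u (f k))| := Finset.abs_sum_le_sum_abs _ _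
    _ ≤ ∑ k, |cof V f k| * ‖a - V.mulVec u‖ := by
        refine Finset.sum_le_sum fun k _ => ?_
        rw [abs_mul]
        refine mul_le_mul_of_nonneg_left ?_ (abs_nonneg _)
        have := norm_le_pi_norm (a - V.mulVec u) (f k)
        simpa [Real.norm_eq_abs] using this
    _ = ‖a - V.mulVec u‖ * ∑ k, |cof V f k| := by rw [← Finset.sum_mul]; ring

end Stmt14

namespace Stmt14

variable {n r : ℕ} (V : Matrix (Fin n) (Fin r) ℝ) (a : Fin n → ℝ)

lemma exists_sol (hcheb : ∀ f : Fin r → Fin n, Function.Injective f →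
      (Matrix.of fun k i => V (f k) i).det ≠ 0)
    (f : Fin (r+1) → Fin n) (hf : Function.Injective f) :
    ∃ u : Fin r → ℝ, ∀ k, |a (f k) - V.mulVec u (f k)|
      = |(bmat V f (fun p => a (f p))).det| / ∑ k, |cof V f k| := by
  set S : ℝ := ∑ k, |cof V f k| with hS
  have hSpos : 0 < S := sumabs_pos V hcheb f hf
  set D : ℝ := (bmat V f (fun p => a (f p))).det with hD
  set e : Fin (r+1) → ℝ := fun k => D / S * |cof V f k| / cof V f k with he
  have hcne : ∀ k, cof V f k ≠ 0 := cof_ne_zero V hcheb f hf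
  have hce : ∀ k, cof V f k * e k = D / S * |cof V f k| := by
    intro k
    have h1 : S ≠ 0 := hSpos.ne'
    have h2 : cof V f k ≠ 0 := hcne k
    rw [he]
    field_simp
  have habse : ∀ k, |e k| = |D| / S := by
    intro k
    rw [he, abs_div, abs_mul, abs_div, abs_abs, abs_of_pos hSpos,
      mul_div_assoc, div_self (abs_ne_zero.mpr (hcne k)), mul_one]
  have hsumce : ∑ k, cof V f k * e k = D := by
    rw [Finset.sum_congr rfl fun k _ => hce k, ← Finset.mul_sum, ← hS,
      div_mul_eq_mul_div, mul_div_assoc, div_self hSpos.ne', mul_one]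
  set b : Fin (r+1) → ℝ := fun k => a (f k) - e k with hb
  have hsumcb : ∑ k, cof V f k * b k = 0 := by
    have : ∑ k, cof V f k * a (f k) = D := (det_bmat V f (fun p => a (f p))).symm
    rw [hb]
    simp only [mul_sub]
    rw [Finset.sum_sub_distrib, this, hsumce, sub_self]
  set A : Matrix (Fin r) (Fin r) ℝ := Matrix.of fun (p q : Fin r) => V (f (Fin.castSucc p)) q
    with hA
  have hAdet : IsUnit A.det :=
    isUnit_iff_ne_zero.mpr (hcheb _ (hf.comp (Fin.castSucc_injective r)))
  set u : Fin r → ℝ := A⁻¹.mulVec (fun p => b (Fin.castSucc p)) with hu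
  have hAu : A.mulVec u = fun p => b (Fin.castSucc p) := by
    rw [hu, Matrix.mulVec_mulVec, Matrix.mul_nonsing_inv _ hAdet, Matrix.one_mulVec]
  have hcs : ∀ p : Fin r, V.mulVec u (f (Fin.castSucc p)) = b (Fin.castSucc p) := by
    intro p
    have := congrFun hAu p
    simpa [Matrix.mulVec, dotProduct, hA] using this
  have hlast : V.mulVec u (f (Fin.last r)) = b (Fin.last r) := by
    have h0 : ∑ k, cof V f k * (V.mulVec u (f k) - b k) = 0 := by
      simp only [mul_sub]
      rw [Finset.sum_sub_distrib, cof_dot_mulVec, hsumcb, sub_self]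
    rw [Fin.sum_univ_castSucc] at h0
    have hz : ∀ p : Fin r,
        cof V f (Fin.castSucc p) * (V.mulVec u (f (Fin.castSucc p)) - b (Fin.castSucc p)) = 0 := by
      intro p; rw [hcs p, sub_self, mul_zero]
    rw [Finset.sum_congr rfl (fun p _ => hz p), Finset.sum_const_zero, zero_add] at h0
    have := mul_eq_zero.mp h0
    rcases this with h | h
    · exact absurd h (hcne _)
    · linarith [sub_eq_zero.mp h]
  have hres : ∀ k, a (f k) - V.mulVec u (f k) = e k := by
    intro k
    induction k using Fin.lastCases with
    | last => rw [hlast, hb]; ring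
    | cast p => rw [hcs p, hb]; ring
  refine ⟨u, fun k => ?_⟩
  rw [hres k, habse k]

end Stmt14

namespace Stmt14

variable {n r : ℕ} (V : Matrix (Fin n) (Fin r) ℝ) (a : Fin n → ℝ)

lemma slab_convex (ρ : ℝ) (i : Fin n) :
    Convex ℝ {u : Fin r → ℝ | |a i - V.mulVec u i| ≤ ρ} := by
  intro u hu v hv s t hs ht hst
  simp only [Set.mem_setOf_eq] at *
  have h1 : V.mulVec (s • u + t • v) i = s * V.mulVec u i + t * V.mulVec v i := by
    rw [Matrix.mulVec_add, Matrix.mulVec_smul, Matrix.mulVec_smul]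
    simp [Pi.smul_apply, smul_eq_mul]
  have h2 : a i - V.mulVec (s • u + t • v) i
      = s * (a i - V.mulVec u i) + t * (a i - V.mulVec v i) := by
    rw [h1]; linear_combination (-(a i)) * hst
  rw [h2]
  refine (abs_add_le _ _).trans ?_
  rw [abs_mul, abs_mul, abs_of_nonneg hs, abs_of_nonneg ht]
  have h3 := mul_le_mul_of_nonneg_left hu hs
  have h4 := mul_le_mul_of_nonneg_left hv ht
  have h5 : s * ρ + t * ρ = ρ := by rw [← add_mul, hst, one_mul]
  linarith

end Stmt14

open Stmt14 in
/-- Combinatorial solution formula for the best Chebyshev approximation. -/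
theorem stmt_14 (n r : ℕ) (hn : r < n) (V : Matrix (Fin n) (Fin r) ℝ) (a : Fin n → ℝ)
    (hcheb : ∀ f : Fin r → Fin n, Function.Injective f →
      (Matrix.of fun k i => V (f k) i).det ≠ 0) :
    (⨅ u : Fin r → ℝ, ‖a - V.mulVec u‖) =
      ⨆ f : {f : Fin (r + 1) → Fin n // StrictMono f},
        |(Matrix.of fun p q : Fin (r + 1) =>
            Fin.lastCases (a (f.1 p)) (fun i => V (f.1 p) i) q).det| /
        ∑ k : Fin (r + 1),
          |(Matrix.of fun (p : Fin r) (i : Fin r) =>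
              V (f.1 (Fin.succAbove k p)) i).det| := by
  have hn' : r + 1 ≤ n := hn
  haveI hne : Nonempty {f : Fin (r+1) → Fin n // StrictMono f} :=
    ⟨⟨Fin.castLE hn', Fin.strictMono_castLE hn'⟩⟩
  set R : {f : Fin (r+1) → Fin n // StrictMono f} → ℝ :=
    fun f => |(bmat V f.1 (fun p => a (f.1 p))).det| / ∑ k, |cof V f.1 k| with hR
  have hRHS : (⨆ f : {f : Fin (r + 1) → Fin n // StrictMono f},
        |(Matrix.of fun p q : Fin (r + 1) =>
            Fin.lastCases (a (f.1 p)) (fun i => V (f.1 p) i) q).det| /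
        ∑ k : Fin (r + 1),
          |(Matrix.of fun (p : Fin r) (i : Fin r) =>
              V (f.1 (Fin.succAbove k p)) i).det|) = ⨆ f, R f := by
    refine iSup_congr fun f => ?_
    rw [hR]
    congr 1
    exact Finset.sum_congr rfl fun k _ => (abs_cof V f.1 k).symm
  rw [hRHS]
  set ρ := ⨆ f, R f with hρ
  have hbdd : BddAbove (Set.range R) := Finite.bddAbove_range R
  have hRle : ∀ f, R f ≤ ρ := fun f => le_ciSup hbdd f
  have hR0 : ∀ f, 0 ≤ R f := fun f =>
    div_nonneg (abs_nonneg _) (Finset.sum_nonneg fun k _ => abs_nonneg _)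
  have hρ0 : 0 ≤ ρ := le_trans (hR0 (Classical.arbitrary _)) (hRle _)
  have h1 : ρ ≤ ⨅ u : Fin r → ℝ, ‖a - V.mulVec u‖ :=
    le_ciInf fun u => ciSup_le fun f => lower_bound V a hcheb f.1 f.2.injective u
  have key : ∀ (f : Fin (r+1) → Fin n), StrictMono f →
      ∃ u, ∀ k, |a (f k) - V.mulVec u (f k)| ≤ ρ := by
    intro f hf
    obtain ⟨u, hu⟩ := exists_sol V a hcheb f hf.injective
    exact ⟨u, fun k => (hu k).le.trans (hRle ⟨f, hf⟩)⟩
  have hHelly : (⋂ i ∈ (Finset.univ : Finset (Fin n)),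
      {u : Fin r → ℝ | |a i - V.mulVec u i| ≤ ρ}).Nonempty := by
    refine Convex.helly_theorem' (fun i _ => slab_convex V a ρ i) ?_
    intro I _ hIcard
    have hIr : I.card ≤ r + 1 := by rwa [Module.finrank_fin_fun] at hIcard
    obtain ⟨J, hIJ, _, hJcard⟩ := Finset.exists_subsuperset_card_eq (Finset.subset_univ I) hIr
      (by simp [hn'])
    set f : Fin (r+1) → Fin n := ⇑(J.orderEmbOfFin hJcard) with hf
    have hfmono : StrictMono f := (J.orderEmbOfFin hJcard).strictMono
    obtain ⟨u, hu⟩ := key f hfmono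
    refine ⟨u, Set.mem_biInter fun i hiI => ?_⟩
    have hiJ : i ∈ J := hIJ hiI
    have : i ∈ Set.range f := by
      rw [hf, Finset.range_orderEmbOfFin]
      exact hiJ
    obtain ⟨k, hk⟩ := this
    exact Set.mem_setOf_eq ▸ (hk ▸ hu k)
  obtain ⟨u0, hu0⟩ := hHelly
  have h2 : (⨅ u, ‖a - V.mulVec u‖) ≤ ρ := by
    refine ciInf_le_of_le ⟨0, fun x hx => ?_⟩ u0 ?_
    · obtain ⟨u, rfl⟩ := hx
      exact norm_nonneg _
    · rw [pi_norm_le_iff_of_nonneg hρ0]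
      intro i
      have := Set.mem_iInter₂.mp hu0 i (Finset.mem_univ i)
      simpa [Real.norm_eq_abs] using this
  exact le_antisymm h2 h1
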